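/- Let Γ be a good pointclass such that every set X ⊆ [ℕ]^ω belonging to Γ has the Ramsey property. Then for every Polish space Y and every Γ-measurable function f : [ℕ]^ω → Y there exists H ∈ [ℕ]^ω such that the restriction of f to [H]^ω is continuous. -/

import Mathlib

open Set

open Classical in
/-- The characteristic function of a set, viewed as a point of the Cantor space `α → Bool`. -/
noncomputable def chi {α : Type} (s : Set α) : α → Bool :=
  fun a => if a ∈ s then true else false
/-- A *good pointclass*: a collection of subsets of Polish spaces containing all clopen
sets and closed under countable intersections, countable unions, finite products,
continuous images, and continuous preimages. -/
structure GoodPointclass : Type 1 where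
  mem : ∀ (X : Type) [TopologicalSpace X], Set (Set X)
  clopen_mem : ∀ (X : Type) [TopologicalSpace X] [PolishSpace X] (s : Set X),
    IsClopen s → s ∈ mem X
  iInter_mem : ∀ (X : Type) [TopologicalSpace X] [PolishSpace X] (s : ℕ → Set X),
    (∀ n, s n ∈ mem X) → (⋂ n, s n) ∈ mem X
  iUnion_mem : ∀ (X : Type) [TopologicalSpace X] [PolishSpace X] (s : ℕ → Set X),
    (∀ n, s n ∈ mem X) → (⋃ n, s n) ∈ mem X
  prod_mem : ∀ (X Y : Type) [TopologicalSpace X] [PolishSpace X]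
    [TopologicalSpace Y] [PolishSpace Y] (s : Set X) (t : Set Y),
    s ∈ mem X → t ∈ mem Y → s ×ˢ t ∈ mem (X × Y)
  image_mem : ∀ (X Y : Type) [TopologicalSpace X] [PolishSpace X]
    [TopologicalSpace Y] [PolishSpace Y] (f : X → Y) (s : Set X),
    Continuous f → s ∈ mem X → f '' s ∈ mem Y
  preimage_mem : ∀ (X Y : Type) [TopologicalSpace X] [PolishSpace X]
    [TopologicalSpace Y] [PolishSpace Y] (f : X → Y) (t : Set Y),
    Continuous f → t ∈ mem Y → f ⁻¹' t ∈ mem X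
/-- A set `X ⊆ [ℕ]^ω` has the Ramsey property: there is an infinite `H ⊆ ℕ` with
`[H]^ω ⊆ X` or `[H]^ω ∩ X = ∅`. -/
def RamseyProp (X : Set (Set ℕ)) : Prop :=
  ∃ H : Set ℕ, H.Infinite ∧
    ((∀ y : Set ℕ, y.Infinite → y ⊆ H → y ∈ X) ∨
     (∀ y : Set ℕ, y.Infinite → y ⊆ H → y ∉ X))
/-- The subset of `ℕ` coded by a point of Cantor space. -/
def toSet (x : ℕ → Bool) : Set ℕ := {n | x n = true}

/-- `[ℕ]^ω` as a subspace of the Cantor space: the codes of infinite subsets of `ℕ`. -/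
def InfCantor : Set (ℕ → Bool) := {x | (toSet x).Infinite}

lemma chi_toSet (x : ℕ → Bool) : chi (toSet x) = x := by
  funext a
  by_cases h : x a = true <;> simp [chi, toSet, h]

lemma toSet_chi (s : Set ℕ) : toSet (chi s) = s := by
  ext n
  by_cases h : n ∈ s <;> simp [toSet, chi, h]

lemma toSet_injective : Function.Injective toSet := fun a b h => by
  rw [← chi_toSet a, h, chi_toSet]

lemma chi_image (Z : Set (Set ℕ)) : chi '' Z = {x | toSet x ∈ Z} := by
  ext x
  constructor
  · rintro ⟨y, hy, rfl⟩
    simpa [toSet_chi] using hy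
  · intro hx
    exact ⟨toSet x, hx, chi_toSet x⟩

lemma nth_range (g : ℕ → ℕ) (hg : StrictMono g) : ∀ n, Nat.nth (· ∈ Set.range g) n = g n := by
  intro n
  induction n using Nat.strong_induction_on with
  | _ n ih =>
    rw [Nat.nth_eq_sInf]
    apply le_antisymm
    · exact Nat.sInf_le ⟨⟨n, rfl⟩, fun k hk => by rw [ih k hk]; exact hg hk⟩
    · refine le_csInf ⟨g n, ⟨n, rfl⟩, fun k hk => by rw [ih k hk]; exact hg hk⟩ ?_
      rintro x ⟨⟨m, rfl⟩, hx⟩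
      rcases lt_or_ge m n with hmn | hmn
      · exfalso
        have := hx m hmn
        rw [ih m hmn] at this
        exact lt_irrefl _ this
      · exact hg.monotone hmn

lemma isOpen_agree (w : ℕ → Bool) (t : ℕ) : IsOpen {z : ℕ → Bool | ∀ i ≤ t, z i = w i} := by
  have : {z : ℕ → Bool | ∀ i ≤ t, z i = w i}
      = ⋂ i ∈ Finset.range (t+1), {z : ℕ → Bool | z i = w i} := by
    ext z
    simp [Nat.lt_succ_iff]
  rw [this]
  refine isOpen_biInter_finset fun i _ => ?_
  have : {z : ℕ → Bool | z i = w i} = (fun z : ℕ → Bool => z i) ⁻¹' {w i} := rfl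
  rw [this]
  exact IsOpen.preimage (continuous_apply i) (isOpen_discrete {w i})

lemma nth_agree {A B : ℕ → Prop} (hA : (setOf A).Infinite) (k : ℕ)
    (h : ∀ i ≤ k, (A i ↔ B i)) :
    ∀ n, Nat.nth A n ≤ k → Nat.nth B n = Nat.nth A n := by
  intro n
  induction n using Nat.strong_induction_on with
  | _ n ih =>
    intro hn
    rw [Nat.nth_eq_sInf B n]
    apply le_antisymm
    · refine Nat.sInf_le ⟨(h _ hn).1 (Nat.nth_mem_of_infinite hA n), fun j hj => ?_⟩
      rw [ih j hj ((Nat.nth_monotone hA hj.le).trans hn)]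
      exact (Nat.nth_lt_nth hA).2 hj
    · refine le_csInf ⟨Nat.nth A n,
        (h _ hn).1 (Nat.nth_mem_of_infinite hA n), fun j hj => ?_⟩ ?_
      · rw [ih j hj ((Nat.nth_monotone hA hj.le).trans hn)]
        exact (Nat.nth_lt_nth hA).2 hj
      · rintro x ⟨hxB, hx⟩
        by_contra hlt
        push_neg at hlt
        have hxA : A x := (h x (le_of_lt (lt_of_lt_of_le hlt hn))).2 hxB
        have hxr : x ∈ Set.range (Nat.nth A) := by
          rw [Nat.range_nth_of_infinite hA]; exact hxA
        obtain ⟨j, hj⟩ := hxr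
        have hjn : j < n := (Nat.nth_lt_nth hA).1 (by rw [hj]; exact hlt)
        have hcon := hx j hjn
        rw [ih j hjn (by rw [hj]; exact le_of_lt (lt_of_lt_of_le hlt hn)), hj] at hcon
        exact lt_irrefl _ hcon

noncomputable def embInf : ↥InfCantor → (ℕ → Bool) × (ℕ → ℕ) :=
  fun x => (↑x, fun n => Nat.nth (· ∈ toSet ↑x) n)

lemma infCantor_infinite (x : ↥InfCantor) : (toSet ↑x).Infinite := x.2

lemma continuous_embInf : Continuous embInf := by
  refine Continuous.prodMk continuous_subtype_val ?_
  refine continuous_pi fun n => ?_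
  refine IsLocallyConstant.continuous ?_
  rw [IsLocallyConstant.iff_exists_open]
  intro x
  have hx : (setOf (· ∈ toSet (↑x : ℕ → Bool))).Infinite := x.2
  set k := Nat.nth (· ∈ toSet (↑x : ℕ → Bool)) n with hk
  refine ⟨Subtype.val ⁻¹' {z : ℕ → Bool | ∀ i ≤ k, z i = (↑x : ℕ → Bool) i},
    (isOpen_agree _ k).preimage continuous_subtype_val, fun i _ => rfl, fun z hz => ?_⟩
  have hagree : ∀ i ≤ k, ((· ∈ toSet (↑x : ℕ → Bool)) i ↔ (· ∈ toSet (↑z : ℕ → Bool)) i) := by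
    intro i hi
    have := hz i hi
    simp only [toSet, Set.mem_setOf_eq]
    rw [this]
  exact nth_agree hx k hagree n le_rfl

lemma isClosed_range_embInf : IsClosed (Set.range embInf) := by
  have hrange : Set.range embInf =
      (⋂ m, {p : (ℕ → Bool) × (ℕ → ℕ) | p.2 m < p.2 (m+1)}) ∩
      ((⋂ m, ⋂ i, {p : (ℕ → Bool) × (ℕ → ℕ) | p.2 i = m → p.1 m = true}) ∩
       (⋂ m, {p : (ℕ → Bool) × (ℕ → ℕ) | p.1 m = true → ∃ i ≤ m, p.2 i = m})) := by
    ext p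
    simp only [Set.mem_inter_iff, Set.mem_iInter, Set.mem_setOf_eq]
    constructor
    · rintro ⟨x, rfl⟩
      have hx : (setOf (· ∈ toSet (↑x : ℕ → Bool))).Infinite := x.2
      refine ⟨fun m => (Nat.nth_lt_nth hx).2 (Nat.lt_succ_self m), ?_, ?_⟩
      · intro m i hi
        have h2 := Nat.nth_mem_of_infinite hx i
        show (↑x : ℕ → Bool) m = true
        have heq : Nat.nth (· ∈ toSet (↑x : ℕ → Bool)) i = m := hi
        rw [← heq]
        exact h2
      · intro m hm
        have hmem : m ∈ Set.range (Nat.nth (· ∈ toSet (↑x : ℕ → Bool))) := by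
          rw [Nat.range_nth_of_infinite hx]; exact hm
        obtain ⟨i, hi⟩ := hmem
        exact ⟨i, by rw [← hi]; exact Nat.le_nth (fun hf => absurd hf hx), hi⟩
    · rintro ⟨h1, h2, h3⟩
      have hg : StrictMono p.2 := strictMono_nat_of_lt_succ h1
      have hts : toSet p.1 = Set.range p.2 := by
        ext m
        constructor
        · intro hm
          obtain ⟨i, _, hi⟩ := h3 m hm
          exact ⟨i, hi⟩
        · rintro ⟨i, rfl⟩
          exact h2 _ i rfl
      have hinf : (toSet p.1).Infinite := by
        rw [hts]; exact Set.infinite_range_of_injective hg.injective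
      refine ⟨⟨p.1, hinf⟩, ?_⟩
      refine Prod.ext rfl ?_
      funext n
      show Nat.nth (· ∈ toSet p.1) n = p.2 n
      have : (· ∈ toSet p.1) = (· ∈ Set.range p.2) := by rw [hts]
      rw [this]
      exact nth_range p.2 hg n
  rw [hrange]
  refine IsClosed.inter ?_ (IsClosed.inter ?_ ?_)
  · refine isClosed_iInter fun m => ?_
    have : {p : (ℕ → Bool) × (ℕ → ℕ) | p.2 m < p.2 (m+1)}
        = (fun p : (ℕ → Bool) × (ℕ → ℕ) => (p.2 m, p.2 (m+1))) ⁻¹' {q : ℕ × ℕ | q.1 < q.2} := rfl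
    rw [this]
    exact IsClosed.preimage
      (((continuous_apply m).comp continuous_snd).prodMk
        ((continuous_apply (m+1)).comp continuous_snd)) (isClosed_discrete _)
  · refine isClosed_iInter fun m => isClosed_iInter fun i => ?_
    have : {p : (ℕ → Bool) × (ℕ → ℕ) | p.2 i = m → p.1 m = true}
        = ((fun p : (ℕ → Bool) × (ℕ → ℕ) => p.2 i) ⁻¹' {m})ᶜ
          ∪ ((fun p : (ℕ → Bool) × (ℕ → ℕ) => p.1 m) ⁻¹' {true}) := by
      ext p
      simp [imp_iff_not_or]
    rw [this]
    exact IsClosed.union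
      (IsOpen.preimage ((continuous_apply i).comp continuous_snd) (isOpen_discrete _)).isClosed_compl
      (IsClosed.preimage ((continuous_apply m).comp continuous_fst) (isClosed_discrete _))
  · refine isClosed_iInter fun m => ?_
    have : {p : (ℕ → Bool) × (ℕ → ℕ) | p.1 m = true → ∃ i ≤ m, p.2 i = m}
        = ((fun p : (ℕ → Bool) × (ℕ → ℕ) => p.1 m) ⁻¹' {true})ᶜ
          ∪ ⋃ i ∈ Set.Iic m, ((fun p : (ℕ → Bool) × (ℕ → ℕ) => p.2 i) ⁻¹' {m}) := by
      ext p
      simp [imp_iff_not_or]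
    rw [this]
    refine IsClosed.union ?_ ?_
    · exact (IsOpen.preimage ((continuous_apply m).comp continuous_fst) (isOpen_discrete _)).isClosed_compl
    · exact (Set.finite_Iic m).isClosed_biUnion fun i _ =>
        IsClosed.preimage ((continuous_apply i).comp continuous_snd) (isClosed_discrete _)

instance polishNatBool : PolishSpace (ℕ → Bool) :=
  instPolishSpaceOfSeparableSpaceOfIsCompletelyMetrizableSpace

instance polishInfCantor : PolishSpace ↥InfCantor := by
  have hemb : Topology.IsClosedEmbedding embInf := by
    refine ⟨?_, isClosed_range_embInf⟩
    refine Topology.IsEmbedding.of_comp continuous_embInf continuous_fst ?_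
    have : (Prod.fst ∘ embInf) = (Subtype.val : ↥InfCantor → ℕ → Bool) := rfl
    rw [this]
    exact Topology.IsEmbedding.subtypeVal
  exact hemb.polishSpace

def Homog (Z : Set (Set ℕ)) (B : Set ℕ) : Prop :=
  (∀ y : Set ℕ, y.Infinite → y ⊆ B → y ∈ Z) ∨ (∀ y : Set ℕ, y.Infinite → y ⊆ B → y ∉ Z)

lemma relRamsey (Γ : GoodPointclass)
    (hRamsey : ∀ X : Set (Set ℕ), (∀ x ∈ X, x.Infinite) →
      chi '' X ∈ Γ.mem (ℕ → Bool) → RamseyProp X)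
    (Z : Set (Set ℕ)) (hZ : ∀ y ∈ Z, y.Infinite)
    (hZΓ : chi '' Z ∈ Γ.mem (ℕ → Bool)) (A : Set ℕ) (hA : A.Infinite) :
    ∃ B, B ⊆ A ∧ B.Infinite ∧ Homog Z B := by
  classical
  have hA' : (setOf (· ∈ A)).Infinite := hA
  set e : ℕ → ℕ := Nat.nth (· ∈ A) with he
  let h : (ℕ → Bool) → (ℕ → Bool) := fun x m => if m ∈ A then x (Nat.count (· ∈ A) m) else false
  have hcont : Continuous h := by
    refine continuous_pi fun m => ?_
    by_cases hm : m ∈ A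
    · simpa [h, hm] using continuous_apply (Nat.count (· ∈ A) m)
    · simpa [h, hm] using (continuous_const : Continuous fun _ : ℕ → Bool => false)
  have htoSet : ∀ x, toSet (h x) = e '' toSet x := by
    intro x
    ext m
    simp only [toSet, Set.mem_setOf_eq, Set.mem_image, h]
    constructor
    · intro hm
      by_cases hmA : m ∈ A
      · rw [if_pos hmA] at hm
        exact ⟨Nat.count (· ∈ A) m, hm, Nat.nth_count hmA⟩
      · rw [if_neg hmA] at hm
        exact absurd hm (by simp)
    · rintro ⟨n, hn, rfl⟩
      rw [if_pos (Nat.nth_mem_of_infinite hA' n), Nat.count_nth_of_infinite hA' n]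
      exact hn
  set Z' : Set (Set ℕ) := {y | e '' y ∈ Z} with hZ'def
  have hZ'Γ : chi '' Z' ∈ Γ.mem (ℕ → Bool) := by
    have himg : chi '' Z' = h ⁻¹' (chi '' Z) := by
      rw [chi_image, chi_image]
      ext x
      show toSet x ∈ Z' ↔ toSet (h x) ∈ Z
      rw [htoSet]
      exact Iff.rfl
    rw [himg]
    exact Γ.preimage_mem _ _ h _ hcont hZΓ
  obtain ⟨H', hH'inf, hH'⟩ := hRamsey Z' (fun y hy => Set.Infinite.of_image e (hZ _ hy)) hZ'Γ
  have key : ∀ y : Set ℕ, y.Infinite → y ⊆ e '' H' →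
      ∃ y₀ : Set ℕ, y₀.Infinite ∧ y₀ ⊆ H' ∧ e '' y₀ = y := by
    intro y hy hyB
    have h3 : e '' {n | n ∈ H' ∧ e n ∈ y} = y := by
      apply Set.Subset.antisymm
      · rintro _ ⟨n, hn, rfl⟩
        exact hn.2
      · intro u hu
        obtain ⟨n, hnH, rfl⟩ := hyB hu
        exact ⟨n, ⟨hnH, hu⟩, rfl⟩
    exact ⟨_, Set.Infinite.of_image e (by rw [h3]; exact hy), fun n hn => hn.1, h3⟩
  refine ⟨e '' H', ?_, hH'inf.image (Nat.nth_injective hA').injOn, ?_⟩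
  · rintro _ ⟨n, _, rfl⟩
    exact Nat.nth_mem_of_infinite hA' n
  · rcases hH' with hpos | hneg
    · left
      intro y hy hyB
      obtain ⟨y₀, h1, h2, h3⟩ := key y hy hyB
      have hz := hpos y₀ h1 h2
      rw [hZ'def] at hz
      rwa [← h3]
    · right
      intro y hy hyB hyZ
      obtain ⟨y₀, h1, h2, h3⟩ := key y hy hyB
      refine hneg y₀ h1 h2 ?_
      show e '' y₀ ∈ Z
      rw [h3]
      exact hyZ

theorem gamma_measurable_restricts_to_continuous (Γ : GoodPointclass)
    (hRamsey : ∀ X : Set (Set ℕ), (∀ x ∈ X, x.Infinite) →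
      chi '' X ∈ Γ.mem (ℕ → Bool) → RamseyProp X)
    (Y : Type) [TopologicalSpace Y] [PolishSpace Y] (f : ↥InfCantor → Y)
    (hf : ∀ U : Set Y, IsOpen U → f ⁻¹' U ∈ Γ.mem ↥InfCantor) :
    ∃ H : Set ℕ, H.Infinite ∧
      ContinuousOn f {x : ↥InfCantor | toSet ↑x ⊆ H} := by

  classical
  obtain ⟨Useq, hUseq⟩ := ((TopologicalSpace.countable_countableBasis Y).insert ∅).exists_eq_range
    (Set.insert_nonempty _ _)
  have hUopen : ∀ n, IsOpen (Useq n) := by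
    intro n
    have hmem : Useq n ∈ insert ∅ (TopologicalSpace.countableBasis Y) := by
      rw [hUseq]; exact Set.mem_range_self n
    rcases Set.mem_insert_iff.1 hmem with h | h
    · rw [h]; exact isOpen_empty
    · exact TopologicalSpace.isOpen_of_mem_countableBasis h
  set Xn : ℕ → Set (Set ℕ) := fun n => (fun z : ↥InfCantor => toSet ↑z) '' (f ⁻¹' Useq n) with hXn
  have hXmem : ∀ n (z : ↥InfCantor), toSet ↑z ∈ Xn n ↔ f z ∈ Useq n := by
    intro n z
    constructor
    · rintro ⟨w, hw, hwz⟩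
      have hwz' : w = z := Subtype.ext (toSet_injective hwz)
      rwa [← hwz']
    · intro hz
      exact ⟨z, hz, rfl⟩
  have hXinf : ∀ n S, S ∈ Xn n → S.Infinite := by
    rintro n S ⟨z, _, rfl⟩
    exact z.2
  have hXΓ : ∀ n, chi '' Xn n ∈ Γ.mem (ℕ → Bool) := by
    intro n
    have himg : chi '' Xn n = Subtype.val '' (f ⁻¹' Useq n) := by
      rw [hXn, ← Set.image_comp]
      refine Set.image_congr fun z _ => ?_
      exact chi_toSet _
    rw [himg]
    exact Γ.image_mem ↥InfCantor (ℕ → Bool) Subtype.val _ continuous_subtype_val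
      (hf _ (hUopen n))
  set Zt : Finset ℕ × ℕ × ℕ → Set (Set ℕ) :=
    fun c => {y : Set ℕ | (↑c.1 ∪ {m | m ∈ y ∧ c.2.1 < m} : Set ℕ) ∈ Xn c.2.2} with hZt
  have hZinf : ∀ c, ∀ y ∈ Zt c, y.Infinite := by
    intro c y hy
    have h1 : ((↑c.1 : Set ℕ) ∪ {m | m ∈ y ∧ c.2.1 < m}).Infinite := hXinf _ _ hy
    have h2 : {m | m ∈ y ∧ c.2.1 < m}.Infinite := by
      by_contra hfin
      rw [Set.not_infinite] at hfin
      exact h1 ((c.1.finite_toSet).union hfin)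
    exact h2.mono fun m hm => hm.1
  have hZΓ : ∀ c, chi '' Zt c ∈ Γ.mem (ℕ → Bool) := by
    intro c
    set g : (ℕ → Bool) → (ℕ → Bool) :=
      fun x m => (decide (m ∈ c.1) || (decide (c.2.1 < m) && x m)) with hg
    have hgcont : Continuous g := by
      refine continuous_pi fun m => ?_
      exact (continuous_of_discreteTopology
        (f := fun b : Bool => (decide (m ∈ c.1) || (decide (c.2.1 < m) && b)))).comp
        (continuous_apply m)
    have hgset : ∀ x, toSet (g x) = (↑c.1 ∪ {m | m ∈ toSet x ∧ c.2.1 < m} : Set ℕ) := by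
      intro x
      ext m
      simp only [toSet, Set.mem_setOf_eq, g, Set.mem_union, Finset.coe_sort_coe,
        Finset.mem_coe, Bool.or_eq_true, decide_eq_true_eq, Bool.and_eq_true]
      tauto
    have himg : chi '' Zt c = g ⁻¹' (chi '' Xn c.2.2) := by
      rw [chi_image, chi_image]
      ext x
      show toSet x ∈ Zt c ↔ toSet (g x) ∈ Xn c.2.2
      rw [hgset]
      exact Iff.rfl
    rw [himg]
    exact Γ.preimage_mem _ _ g _ hgcont (hXΓ c.2.2)
  have step : ∀ (A : Set ℕ), A.Infinite → ∀ j : ℕ,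
      ∃ B, B ⊆ A ∧ B.Infinite ∧
        ∀ c : Finset ℕ × ℕ × ℕ, Encodable.decode j = some c → Homog (Zt c) B := by
    intro A hA j
    rcases hdec : (Encodable.decode j : Option (Finset ℕ × ℕ × ℕ)) with _ | c
    · exact ⟨A, subset_rfl, hA, fun c hc => nomatch hc⟩
    · obtain ⟨B, h1, h2, h3⟩ := relRamsey Γ hRamsey (Zt c) (hZinf c) (hZΓ c) A hA
      refine ⟨B, h1, h2, fun c' hc' => ?_⟩
      injection hc' with hcc
      rw [← hcc]
      exact h3
  let G : ℕ → {A : Set ℕ // A.Infinite} := fun j =>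
    Nat.rec ⟨Set.univ, Set.infinite_univ⟩
      (fun j p => ⟨(step p.1 p.2 j).choose, (step p.1 p.2 j).choose_spec.2.1⟩) j
  have hGsucc : ∀ j, (G (j+1)).1 ⊆ (G j).1 ∧
      ∀ c : Finset ℕ × ℕ × ℕ, Encodable.decode j = some c → Homog (Zt c) (G (j+1)).1 :=
    fun j => ⟨(step (G j).1 (G j).2 j).choose_spec.1, (step (G j).1 (G j).2 j).choose_spec.2.2⟩
  have hGmono : ∀ a b : ℕ, a ≤ b → (G b).1 ⊆ (G a).1 := by
    intro a b hab
    induction b, hab using Nat.le_induction with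
    | base => exact subset_rfl
    | succ n hn ih => exact ((hGsucc n).1).trans ih
  have hGhom : ∀ c : Finset ℕ × ℕ × ℕ, Homog (Zt c) (G (Encodable.encode c + 1)).1 :=
    fun c => (hGsucc (Encodable.encode c)).2 c (Encodable.encodek c)
  set F : ℕ → ℕ := fun t =>
    ((Finset.range (t+1)).powerset ×ˢ (Finset.range (t+1) ×ˢ Finset.range (t+1))).sup
      (fun c : Finset ℕ × ℕ × ℕ => Encodable.encode c + 1) with hF
  have hFbound : ∀ (s : Finset ℕ) (t n : ℕ), s ⊆ Finset.range (t+1) → n < t+1 →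
      Encodable.encode ((s, t, n) : Finset ℕ × ℕ × ℕ) + 1 ≤ F t := by
    intro s t n hs hn
    have hle : (fun c : Finset ℕ × ℕ × ℕ => Encodable.encode c + 1) ((s, t, n) : Finset ℕ × ℕ × ℕ)
        ≤ ((Finset.range (t+1)).powerset ×ˢ (Finset.range (t+1) ×ˢ Finset.range (t+1))).sup
          (fun c : Finset ℕ × ℕ × ℕ => Encodable.encode c + 1) :=
      Finset.le_sup (f := fun c : Finset ℕ × ℕ × ℕ => Encodable.encode c + 1)
        (b := ((s, t, n) : Finset ℕ × ℕ × ℕ))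
        (Finset.mem_product.2 ⟨Finset.mem_powerset.2 hs,
          Finset.mem_product.2 ⟨Finset.mem_range.2 (Nat.lt_succ_self t), Finset.mem_range.2 hn⟩⟩)
    exact hle
  have hFmono : Monotone F := by
    intro a b hab
    refine Finset.sup_mono ?_
    refine Finset.product_subset_product ?_ (Finset.product_subset_product ?_ ?_)
    · exact Finset.powerset_mono.2 (Finset.range_subset_range.2 (Nat.succ_le_succ hab))
    · exact Finset.range_subset_range.2 (Nat.succ_le_succ hab)
    · exact Finset.range_subset_range.2 (Nat.succ_le_succ hab)
  let bseq : ℕ → ℕ := fun i =>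
    Nat.rec 0 (fun _ bi => ((G (F bi)).2.exists_gt bi).choose) i
  have hbspec : ∀ i, bseq (i+1) ∈ (G (F (bseq i))).1 ∧ bseq i < bseq (i+1) :=
    fun i => ⟨((G (F (bseq i))).2.exists_gt (bseq i)).choose_spec.1,
           ((G (F (bseq i))).2.exists_gt (bseq i)).choose_spec.2⟩
  have hbmono : StrictMono bseq := strictMono_nat_of_lt_succ fun i => (hbspec i).2
  set H : Set ℕ := Set.range bseq with hH
  have hkey : ∀ t u : ℕ, t ∈ H → u ∈ H → t < u → u ∈ (G (F t)).1 := by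
    rintro _ _ ⟨m, rfl⟩ ⟨i, rfl⟩ hlt
    have him : m < i := hbmono.lt_iff_lt.mp hlt
    obtain ⟨i', rfl⟩ : ∃ i', i = i' + 1 := ⟨i - 1, by omega⟩
    have h1 : bseq (i'+1) ∈ (G (F (bseq i'))).1 := (hbspec i').1
    have h2 : (G (F (bseq i'))).1 ⊆ (G (F (bseq m))).1 :=
      hGmono _ _ (hFmono (hbmono.monotone (by omega)))
    exact h2 h1
  refine ⟨H, Set.infinite_range_of_injective hbmono.injective, ?_⟩
  rw [continuousOn_iff]
  intro x hx U hU hfxU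
  obtain ⟨V, hVb, hfxV, hVU⟩ :=
    (TopologicalSpace.isBasis_countableBasis Y).exists_subset_of_mem_open hfxU hU
  obtain ⟨n, hn⟩ : V ∈ Set.range Useq := by
    rw [← hUseq]
    exact Set.mem_insert_of_mem _ hVb
  obtain ⟨t, htx, hnt⟩ := (infCantor_infinite x).exists_gt n
  have hsfin : (toSet (↑x : ℕ → Bool) ∩ Set.Iic t).Finite :=
    (Set.finite_Iic t).subset Set.inter_subset_right
  set s : Finset ℕ := hsfin.toFinset with hs
  have hscoe : (↑s : Set ℕ) = toSet (↑x : ℕ → Bool) ∩ Set.Iic t := hsfin.coe_toFinset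
  have hsub : s ⊆ Finset.range (t+1) := by
    intro m hm
    rw [hs, Set.Finite.mem_toFinset] at hm
    exact Finset.mem_range.2 (Nat.lt_succ_of_le hm.2)
  set c : Finset ℕ × ℕ × ℕ := (s, t, n) with hc
  set j : ℕ := Encodable.encode c with hj
  have hGsubt : (G (F t)).1 ⊆ (G (j+1)).1 := hGmono _ _ (hFbound s t n hsub (by omega))
  have htail : ∀ z : ↥InfCantor, toSet ↑z ⊆ H →
      (toSet (↑z : ℕ → Bool) \ Set.Iic t) ⊆ (G (j+1)).1 := by
    intro z hz u hu
    have hut : t < u := by simpa using hu.2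
    exact hGsubt (hkey t u (hx htx) (hz hu.1) hut)
  have hxX : toSet (↑x : ℕ → Bool) ∈ Xn n := (hXmem n x).2 (hn ▸ hfxV)
  have hunion : ∀ z : ↥InfCantor, (∀ i ≤ t, (↑z : ℕ → Bool) i = (↑x : ℕ → Bool) i) →
      (↑s ∪ {m | m ∈ (toSet (↑z : ℕ → Bool) \ Set.Iic t) ∧ t < m} : Set ℕ)
        = toSet (↑z : ℕ → Bool) := by
    intro z hzx
    rw [hscoe]
    ext m
    simp only [Set.mem_union, Set.mem_inter_iff, Set.mem_diff, Set.mem_Iic, Set.mem_setOf_eq]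
    constructor
    · rintro (⟨hmx, hmt⟩ | ⟨⟨hmz, _⟩, _⟩)
      · show (↑z : ℕ → Bool) m = true
        rw [hzx m hmt]
        exact hmx
      · exact hmz
    · intro hmz
      by_cases hmt : m ≤ t
      · left
        refine ⟨?_, hmt⟩
        show (↑x : ℕ → Bool) m = true
        rw [← hzx m hmt]
        exact hmz
      · exact Or.inr ⟨⟨hmz, hmt⟩, lt_of_not_ge hmt⟩
  have hwit : (toSet (↑x : ℕ → Bool) \ Set.Iic t) ∈ Zt c := by
    show (↑s ∪ {m | m ∈ (toSet (↑x : ℕ → Bool) \ Set.Iic t) ∧ t < m} : Set ℕ) ∈ Xn n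
    rw [hunion x (fun i _ => rfl)]
    exact hxX
  have hpos : ∀ y : Set ℕ, y.Infinite → y ⊆ (G (j+1)).1 → y ∈ Zt c := by
    rcases hGhom c with hp | hneg
    · exact hp
    · exact absurd hwit
        (hneg _ ((infCantor_infinite x).diff (Set.finite_Iic t)) (htail x hx))
  refine ⟨Subtype.val ⁻¹' {z : ℕ → Bool | ∀ i ≤ t, z i = (↑x : ℕ → Bool) i},
    (isOpen_agree _ t).preimage continuous_subtype_val, fun i _ => rfl, ?_⟩
  rintro z ⟨hz1, hz2⟩
  have hyz : (toSet (↑z : ℕ → Bool) \ Set.Iic t) ∈ Zt c :=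
    hpos _ ((infCantor_infinite z).diff (Set.finite_Iic t)) (htail z hz2)
  have hzX : toSet (↑z : ℕ → Bool) ∈ Xn n := by
    rw [← hunion z hz1]
    exact hyz
  exact hVU (hn ▸ (hXmem n z).1 hzX)
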